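/- Let q be a real number with q > 0 and q ≠ 1, and let φ : W^q → W^q be an odd q-derivation of degree s ∈ ℤ, i.e. φ is linear, φ(L_n) ∈ span{G_{n+s}} and φ(G_n) ∈ span{L_{n+s}} for all n ∈ ℤ, and φ([x,y]) = (1/(1+q^{s+1}))·([φ(x),α(y)] + (−1)^{|x|}[α(x),φ(y)]) for all homogeneous x,y ∈ W^q. Then φ is a scalar multiple of the inner q-derivation ad_{G_s} : x ↦ [G_s, x]. Hence (Der W^q)₁ = ⊕_{s∈ℤ} ⟨ad_{G_s}⟩. -/

import Mathlib

/-- The `q`-number `{n} = (1 - qⁿ)/(1 - q)`. -/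
noncomputable def qInt (q : ℂ) (n : ℤ) : ℂ := (1 - q ^ n) / (1 - q)

/-- The grading of the `q`-deformed Witt superalgebra: even part spanned by the `L n`
(`= b (Sum.inl n)`), odd part spanned by the `G n` (`= b (Sum.inr n)`). -/
def wGr {W : Type*} [AddCommGroup W] [Module ℂ W] (b : Module.Basis (ℤ ⊕ ℤ) ℂ W) :
    ZMod 2 → Submodule ℂ W :=
  fun i => if i = 0 then Submodule.span ℂ (Set.range fun n : ℤ => b (Sum.inl n))
           else Submodule.span ℂ (Set.range fun n : ℤ => b (Sum.inr n))

/-- For real `q > 0`, `q ≠ 1`: every odd `q`-derivation of degree `s` of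
the `q`-deformed Witt superalgebra is a scalar multiple of the inner `q`-derivation
`ad_{G_s} : x ↦ [G_s, x]`, and `ad_{G_s}` is itself an odd `q`-derivation of degree `s`.
Hence `(Der W^q)₁ = ⊕_{s ∈ ℤ} ⟨ad_{G_s}⟩`. -/
theorem qWitt_odd_qDerivations
    (q : ℝ) (hq0 : 0 < q) (hq1 : q ≠ 1)
    (W : Type*) [AddCommGroup W] [Module ℂ W] (b : Module.Basis (ℤ ⊕ ℤ) ℂ W)
    (br : W → W → W)
    (hbr1 : ∀ x, IsLinearMap ℂ (br x)) (hbr2 : ∀ y, IsLinearMap ℂ fun x => br x y)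
    (α : W → W) (hα : IsLinearMap ℂ α)
    (hLL : ∀ n m : ℤ, br (b (Sum.inl n)) (b (Sum.inl m)) =
        (qInt q m - qInt q n) • b (Sum.inl (n + m)))
    (hLG : ∀ n m : ℤ, br (b (Sum.inl n)) (b (Sum.inr m)) =
        (qInt q (m + 1) - qInt q n) • b (Sum.inr (n + m)))
    (hGL : ∀ n m : ℤ, br (b (Sum.inr m)) (b (Sum.inl n)) =
        -((qInt q (m + 1) - qInt q n) • b (Sum.inr (n + m))))
    (hGG : ∀ n m : ℤ, br (b (Sum.inr n)) (b (Sum.inr m)) = 0)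
    (hαL : ∀ n : ℤ, α (b (Sum.inl n)) = (1 + (q : ℂ) ^ n) • b (Sum.inl n))
    (hαG : ∀ n : ℤ, α (b (Sum.inr n)) = (1 + (q : ℂ) ^ (n + 1)) • b (Sum.inr n))
    -- φ is an odd q-derivation of degree s
    (s : ℤ) (φ : W → W) (hφ : IsLinearMap ℂ φ)
    (hφL : ∀ n : ℤ, φ (b (Sum.inl n)) ∈ Submodule.span ℂ {b (Sum.inr (n + s))})
    (hφG : ∀ n : ℤ, φ (b (Sum.inr n)) ∈ Submodule.span ℂ {b (Sum.inl (n + s))})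
    (hleib : ∀ (i j : ZMod 2), ∀ x ∈ wGr b i, ∀ y ∈ wGr b j,
        φ (br x y) = (1 / (1 + (q : ℂ) ^ (s + 1))) •
          (br (φ x) (α y) + ((-1 : ℂ) ^ i.val) • br (α x) (φ y))) :
    (∃ c : ℂ, ∀ x : W, φ x = c • br (b (Sum.inr s)) x) ∧
    -- ad_{G_s} is itself an odd q-derivation of degree s
    (∀ n : ℤ, br (b (Sum.inr s)) (b (Sum.inl n)) ∈ Submodule.span ℂ {b (Sum.inr (n + s))}) ∧
    (∀ n : ℤ, br (b (Sum.inr s)) (b (Sum.inr n)) ∈ Submodule.span ℂ {b (Sum.inl (n + s))}) ∧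
    (∀ (i j : ZMod 2), ∀ x ∈ wGr b i, ∀ y ∈ wGr b j,
        br (b (Sum.inr s)) (br x y) = (1 / (1 + (q : ℂ) ^ (s + 1))) •
          (br (br (b (Sum.inr s)) x) (α y) +
            ((-1 : ℂ) ^ i.val) • br (α x) (br (b (Sum.inr s)) y))) := by
  set Q : ℂ := (q : ℂ) with hQdef
  -- basic facts about Q
  have hQ0 : Q ≠ 0 := by
    simp only [hQdef, Ne, Complex.ofReal_eq_zero]; exact hq0.ne'
  have hQ1 : Q ≠ 1 := by
    simp only [hQdef, Ne, ← Complex.ofReal_one, Complex.ofReal_inj]; exact hq1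
  have h1Q : (1 : ℂ) - Q ≠ 0 := sub_ne_zero.2 (Ne.symm hQ1)
  have h1p : ∀ a : ℤ, (1 : ℂ) + Q ^ a ≠ 0 := by
    intro a
    rw [hQdef, ← Complex.ofReal_zpow, ← Complex.ofReal_one, ← Complex.ofReal_add]
    simp only [Ne, Complex.ofReal_eq_zero]
    positivity
  have hQinj : ∀ a b : ℤ, a ≠ b → Q ^ a ≠ Q ^ b := by
    intro a c h
    rw [hQdef, ← Complex.ofReal_zpow, ← Complex.ofReal_zpow, Ne, Complex.ofReal_inj]
    exact fun hc => h (zpow_right_injective₀ hq0 hq1 hc)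
  have zadd : ∀ a b : ℤ, Q ^ (a + b) = Q ^ a * Q ^ b := fun a b => zpow_add₀ hQ0 a b
  have hqd : ∀ a c : ℤ, a ≠ c → qInt Q a - qInt Q c ≠ 0 := by
    intro a c h
    unfold qInt
    rw [div_sub_div_same]
    refine div_ne_zero ?_ h1Q
    intro hcon
    exact hQinj c a (Ne.symm h) (by linear_combination hcon)
  have q0 : qInt Q 0 = 0 := by unfold qInt; simp
  have q1 : qInt Q 1 = 1 := by unfold qInt; rw [zpow_one, div_self h1Q]
  -- coefficient extraction
  have hcoe : ∀ (x y : ℂ) (k : ℤ ⊕ ℤ), x • b k = y • b k → x = y := by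
    intro x y k h
    have h2 : (x - y) • b k = 0 := by rw [sub_smul, h, sub_self]
    rcases smul_eq_zero.1 h2 with h3 | h3
    · exact sub_eq_zero.1 h3
    · exact absurd h3 (b.ne_zero k)
  -- linearity helpers
  have brs1 : ∀ (a : ℂ) (x y : W), br x (a • y) = a • br x y := fun a x y => (hbr1 x).map_smul a y
  have brs2 : ∀ (a : ℂ) (x y : W), br (a • x) y = a • br x y := fun a x y => (hbr2 y).map_smul a x
  have φs : ∀ (a : ℂ) (x : W), φ (a • x) = a • φ x := fun a x => hφ.map_smul a x
  -- membership of basis vectors in the grading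
  have hmemL : ∀ n : ℤ, b (Sum.inl n) ∈ wGr b 0 := by
    intro n
    simp only [wGr, if_pos rfl]
    exact Submodule.subset_span ⟨n, rfl⟩
  have hmemG : ∀ n : ℤ, b (Sum.inr n) ∈ wGr b 1 := by
    intro n
    simp only [wGr, if_neg (by decide : (1 : ZMod 2) ≠ 0)]
    exact Submodule.subset_span ⟨n, rfl⟩
  -- the coefficients of φ
  choose e he using fun n : ℤ => Submodule.mem_span_singleton.1 (hφL n)
  choose d hd using fun n : ℤ => Submodule.mem_span_singleton.1 (hφG n)
  -- === the three structure relations ===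
  have RL : ∀ n m : ℤ, (qInt Q m - qInt Q n) * e (n + m) * (1 + Q ^ (s + 1)) =
      -(e n * (1 + Q ^ m) * (qInt Q (n + s + 1) - qInt Q m)) +
        (1 + Q ^ n) * e m * (qInt Q (m + s + 1) - qInt Q n) := by
    intro n m
    have h := hleib 0 0 _ (hmemL n) _ (hmemL m)
    rw [hLL n m, φs] at h
    simp only [← he, hαL] at h
    simp only [brs1, brs2] at h
    rw [hGL m (n + s), hLG n (m + s)] at h
    simp only [show ((0 : ZMod 2)).val = 0 from rfl, pow_zero, one_smul] at h
    rw [show m + (n + s) = n + m + s by ring, show n + (m + s) = n + m + s by ring] at h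
    have h2 : ((qInt Q m - qInt Q n) * e (n + m)) • b (Sum.inr (n + m + s)) =
        ((1 / (1 + Q ^ (s + 1))) *
          (-(e n * (1 + Q ^ m) * (qInt Q (n + s + 1) - qInt Q m)) +
            (1 + Q ^ n) * e m * (qInt Q (m + s + 1) - qInt Q n))) •
          b (Sum.inr (n + m + s)) := by
      linear_combination (norm := module) h
    have h3 := hcoe _ _ _ h2
    field_simp [h1p (s + 1)] at h3
    linear_combination h3
  have RG : ∀ n m : ℤ, (qInt Q (m + 1) - qInt Q n) * d (n + m) * (1 + Q ^ (s + 1)) =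
      (1 + Q ^ n) * d m * (qInt Q (m + s) - qInt Q n) := by
    intro n m
    have h := hleib 0 1 _ (hmemL n) _ (hmemG m)
    rw [hLG n m, φs] at h
    simp only [← he, ← hd, hαL, hαG] at h
    simp only [brs1, brs2] at h
    rw [hGG (n + s) m, hLL n (m + s)] at h
    simp only [show ((0 : ZMod 2)).val = 0 from rfl, pow_zero, one_smul, smul_zero, zero_add] at h
    rw [show n + (m + s) = n + m + s by ring] at h
    have h2 : ((qInt Q (m + 1) - qInt Q n) * d (n + m)) • b (Sum.inl (n + m + s)) =
        ((1 / (1 + Q ^ (s + 1))) *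
          ((1 + Q ^ n) * d m * (qInt Q (m + s) - qInt Q n))) • b (Sum.inl (n + m + s)) := by
      linear_combination (norm := module) h
    have h3 := hcoe _ _ _ h2
    field_simp [h1p (s + 1)] at h3
    linear_combination h3
  have RGG : ∀ n m : ℤ, d n * (1 + Q ^ (m + 1)) * (qInt Q (m + 1) - qInt Q (n + s)) +
      (1 + Q ^ (n + 1)) * d m * (qInt Q (n + 1) - qInt Q (m + s)) = 0 := by
    intro n m
    have h := hleib 1 1 _ (hmemG n) _ (hmemG m)
    rw [hGG n m, hφ.map_zero] at h
    simp only [← hd, hαG] at h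
    simp only [brs1, brs2] at h
    rw [hLG (n + s) m, hGL (m + s) n] at h
    simp only [show ((1 : ZMod 2)).val = 1 from rfl, pow_one] at h
    rw [show n + s + m = n + m + s by ring, show m + s + n = n + m + s by ring] at h
    have h2 : (0 : ℂ) • b (Sum.inr (n + m + s)) =
        ((1 / (1 + Q ^ (s + 1))) *
          (d n * (1 + Q ^ (m + 1)) * (qInt Q (m + 1) - qInt Q (n + s)) +
            (1 + Q ^ (n + 1)) * d m * (qInt Q (n + 1) - qInt Q (m + s)))) •
          b (Sum.inr (n + m + s)) := by
      linear_combination (norm := module) h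
    have h3 := hcoe _ _ _ h2
    field_simp [h1p (s + 1)] at h3
    linear_combination -h3
  -- === auxiliary q-number identities ===
  have qrec : ∀ k : ℤ, qInt Q (k + 1) = 1 + Q * qInt Q k := by
    intro k
    simp only [qInt, zadd, zpow_one]
    field_simp
    ring
  have h1pQ : (1 : ℂ) + Q ≠ 0 := by have := h1p 1; rwa [zpow_one] at this
  have qmul : ∀ k : ℤ, (1 - Q) * qInt Q k = 1 - Q ^ k := by
    intro k; unfold qInt; field_simp
  have hpows : ∀ k : ℤ, Q ^ (k - 1) * Q = Q ^ k := by
    intro k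
    rw [zpow_sub_one₀ hQ0, mul_assoc, inv_mul_cancel₀ hQ0, mul_one]
  -- === d vanishes ===
  have hd0 : ∀ n : ℤ, d n = 0 := by
    by_cases hs1 : s = 1
    · subst hs1
      have key : ∀ m : ℤ, m ≠ -1 → d m = 0 := by
        intro m hm
        have h := RG 0 m
        simp only [zero_add, zpow_zero] at h
        have h2 : d m * ((qInt Q (m + 1) - qInt Q 0) * (Q ^ ((1:ℤ) + 1) - 1)) = 0 := by
          linear_combination h
        rcases mul_eq_zero.1 h2 with h3 | h3
        · exact h3
        · exact absurd h3 (mul_ne_zero (hqd (m + 1) 0 (by omega))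
            (sub_ne_zero.2 (by simpa using hQinj (1 + 1) 0 (by omega))))
      intro n
      by_cases hn : n = -1
      · subst hn
        have h := RG 2 (-1)
        rw [show (2:ℤ) + -1 = 1 by norm_num, show (-1:ℤ) + 1 = 0 by norm_num,
          key 1 (by omega)] at h
        have h2 : d (-1) * ((1 + Q ^ (2:ℤ)) * (qInt Q 0 - qInt Q 2)) = 0 := by
          linear_combination -h
        rcases mul_eq_zero.1 h2 with h3 | h3
        · exact h3
        · exact absurd h3 (mul_ne_zero (h1p 2) (hqd 0 2 (by omega)))
      · exact key n hn
    · intro n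
      have h := RGG n n
      have h2 : d n * ((1 + Q ^ (n + 1)) * ((qInt Q (n + 1) - qInt Q (n + s)) * 2)) = 0 := by
        linear_combination h
      rcases mul_eq_zero.1 h2 with h3 | h3
      · exact h3
      · exact absurd h3 (mul_ne_zero (h1p (n + 1))
          (mul_ne_zero (hqd (n + 1) (n + s) (by omega)) two_ne_zero))
  -- === the key relation for e with m = 0 ===
  have star : ∀ n : ℤ, e n * qInt Q (s + 1) * (1 + Q ^ n) =
      e 0 * (qInt Q (s + 1) - qInt Q n) * (1 + Q ^ n) := by
    intro n
    have h := RL n 0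
    simp only [add_zero, zero_add] at h
    simp only [qInt, zadd, zpow_one, zpow_zero] at h ⊢
    linear_combination h
  -- === e is proportional to n ↦ {n} - {s+1} ===
  obtain ⟨c, hec⟩ : ∃ c : ℂ, ∀ n : ℤ, e n = c * (qInt Q n - qInt Q (s + 1)) := by
    by_cases hs : s = -1
    · subst hs
      rw [show (-1:ℤ) + 1 = 0 by norm_num]
      have star1 : e 0 = 0 := by
        have h := star 1
        rw [show (-1:ℤ) + 1 = 0 by norm_num, q0, q1] at h
        have h2 : e 0 * (1 + Q ^ (1:ℤ)) = 0 := by linear_combination h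
        rcases mul_eq_zero.1 h2 with h3 | h3
        · exact h3
        · exact absurd h3 (h1p 1)
      have R : ∀ n m : ℤ, n ≠ m →
          2 * e (n + m) = e n * (1 + Q ^ m) + e m * (1 + Q ^ n) := by
        intro n m hnm
        have h := RL n m
        rw [show (-1:ℤ) + 1 = 0 by norm_num, show n + -1 + 1 = n by ring,
          show m + -1 + 1 = m by ring, zpow_zero] at h
        have h2 : (qInt Q m - qInt Q n) *
            (2 * e (n + m) - e n * (1 + Q ^ m) - e m * (1 + Q ^ n)) = 0 := by
          linear_combination h
        rcases mul_eq_zero.1 h2 with h3 | h3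
        · exact absurd h3 (hqd m n (Ne.symm hnm))
        · linear_combination h3
      have down : ∀ n : ℤ, n ≤ 1 → e n = e 1 * qInt Q n := by
        refine Int.le_induction_down ?_ ?_
        · rw [q1]; ring
        · intro n hn ih
          have h := R (n - 1) 1 (by omega)
          rw [show n - 1 + 1 = n by ring, zpow_one] at h
          have A1 := qmul (n - 1)
          have A2 := qmul n
          have hpow := hpows n
          have h2 : e (n - 1) * ((1 + Q) * (1 - Q)) =
              e 1 * qInt Q (n - 1) * ((1 + Q) * (1 - Q)) := by
            linear_combination (-(1 - Q)) * h + (2 * (1 - Q)) * ih +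
              (-(1 + Q) * e 1) * A1 + (2 * e 1) * A2 + (2 * e 1) * hpow
          exact mul_right_cancel₀ (mul_ne_zero h1pQ h1Q) h2
      have up : ∀ n : ℤ, 2 ≤ n → e n = e 1 * qInt Q n := by
        refine Int.le_induction ?_ ?_
        · -- base case n = 2
          have hA := R 2 1 (by omega)
          have hB := R 3 (-1) (by omega)
          rw [show (2:ℤ) + 1 = 3 by norm_num] at hA
          rw [show (3:ℤ) + -1 = 2 by norm_num] at hB
          have hC := down (-1) (by omega)
          have hp1 : Q ^ (1:ℤ) = Q := zpow_one Q
          have hp2 : Q ^ (2:ℤ) = Q * Q := by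
            rw [show (2:ℤ) = 1 + 1 by norm_num, zadd, hp1]
          have hp3 : Q ^ (3:ℤ) = Q * Q * Q := by
            rw [show (3:ℤ) = 1 + 1 + 1 by norm_num, zadd, zadd, hp1]
          have hpm : Q ^ (-1:ℤ) = Q⁻¹ := by
            rw [zpow_neg, hp1]
          have hQi : Q * Q⁻¹ = 1 := mul_inv_cancel₀ hQ0
          have qm1 : Q * qInt Q (-1) = -1 := by
            have h0 := qrec (-1)
            rw [show (-1:ℤ) + 1 = 0 by norm_num, q0] at h0
            linear_combination -h0
          have q2v : qInt Q 2 = 1 + Q := by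
            have h0 := qrec 1
            rw [q1] at h0
            rw [show (2:ℤ) = 1 + 1 by norm_num, h0]
            ring
          rw [hp1, hp2] at hA
          rw [hpm, hp3] at hB
          rw [q2v]
          have h2 : e 2 * ((1 - Q) * (1 - Q)) = e 1 * (1 + Q) * ((1 - Q) * (1 - Q)) := by
            linear_combination (-(2 * Q)) * hB - (Q * (1 + Q⁻¹)) * hA -
              (2 * Q * (1 + Q * Q * Q)) * hC - (2 * (1 + Q * Q * Q) * e 1) * qm1 -
              ((1 + Q) * e 2 + (1 + Q * Q) * e 1) * hQi
          exact mul_right_cancel₀ (mul_ne_zero h1Q h1Q) h2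
        · intro n hn ih
          have h := R n 1 (by omega)
          rw [zpow_one] at h
          have qq := qrec n
          linear_combination (1/2 : ℂ) * h + ((1 + Q)/2) * ih - e 1 * qq +
            (e 1/2) * qmul n
      refine ⟨e 1, fun n => ?_⟩
      rw [q0, sub_zero]
      rcases le_or_gt n 1 with h | h
      · exact down n h
      · exact up n (by omega)
    · have hs10 : qInt Q (s + 1) ≠ 0 := by
        have := hqd (s + 1) 0 (by omega)
        rwa [q0, sub_zero] at this
      refine ⟨-(e 0 / qInt Q (s + 1)), fun n => ?_⟩
      have h2 := mul_right_cancel₀ (h1p n) (star n)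
      field_simp
      linear_combination h2
  -- === value of φ on basis vectors ===
  have br0r : ∀ x : W, br x 0 = 0 := fun x => (hbr1 x).map_zero
  have br0l : ∀ y : W, br 0 y = 0 := fun y => (hbr2 y).map_zero
  have brn1 : ∀ (x u : W), br x (-u) = -br x u := fun x u => (hbr1 x).map_neg u
  have brn2 : ∀ (u y : W), br (-u) y = -br u y := fun u y => (hbr2 y).map_neg u
  have hφval : ∀ k : ℤ ⊕ ℤ, φ (b k) = c • br (b (Sum.inr s)) (b k) := by
    intro k
    cases k with
    | inl n =>
      rw [← he n, hGL n s, hec n]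
      module
    | inr n =>
      rw [← hd n, hd0 n, hGG s n, smul_zero, zero_smul]
  have hlin2 : IsLinearMap ℂ (fun x : W => c • br (b (Sum.inr s)) x) :=
    ⟨fun u v => by rw [(hbr1 _).map_add, smul_add],
     fun a u => by rw [brs1]; exact smul_comm c a _⟩
  have hmain : ∀ x : W, φ x = c • br (b (Sum.inr s)) x := by
    have hx : IsLinearMap.mk' φ hφ = IsLinearMap.mk' _ hlin2 :=
      Module.Basis.ext b fun k => hφval k
    exact fun x => LinearMap.congr_fun hx x
  refine ⟨⟨c, hmain⟩, ?_, ?_, ?_⟩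
  · intro n
    rw [hGL n s]
    exact neg_mem (Submodule.smul_mem _ _ (Submodule.mem_span_singleton_self _))
  · intro n
    rw [hGG s n]
    exact zero_mem _
  · -- ad_{G_s} satisfies the q-Leibniz rule
    have mkB1 : ∀ x : W, IsLinearMap ℂ (fun y => br (b (Sum.inr s)) (br x y)) := fun x =>
      ⟨fun u v => by rw [(hbr1 x).map_add, (hbr1 (b (Sum.inr s))).map_add],
       fun a u => by rw [brs1, brs1]⟩
    have mkB2 : ∀ y : W, IsLinearMap ℂ (fun x => br (b (Sum.inr s)) (br x y)) := fun y =>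
      ⟨fun u v => by rw [(hbr2 y).map_add, (hbr1 (b (Sum.inr s))).map_add],
       fun a u => by rw [brs2, brs1]⟩
    have mkC1 : ∀ (ε : ℂ) (x : W), IsLinearMap ℂ (fun y =>
        (1 / (1 + Q ^ (s + 1))) •
          (br (br (b (Sum.inr s)) x) (α y) + ε • br (α x) (br (b (Sum.inr s)) y))) := by
      intro ε x
      constructor
      · intro u v
        rw [hα.map_add, (hbr1 (br (b (Sum.inr s)) x)).map_add,
          (hbr1 (b (Sum.inr s))).map_add u v, (hbr1 (α x)).map_add]
        module
      · intro a u
        rw [hα.map_smul, brs1 a (b (Sum.inr s)) u, brs1, brs1]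
        module
    have mkC2 : ∀ (ε : ℂ) (y : W), IsLinearMap ℂ (fun x =>
        (1 / (1 + Q ^ (s + 1))) •
          (br (br (b (Sum.inr s)) x) (α y) + ε • br (α x) (br (b (Sum.inr s)) y))) := by
      intro ε y
      constructor
      · intro u v
        rw [hα.map_add, (hbr1 (b (Sum.inr s))).map_add u v, (hbr2 (α y)).map_add,
          (hbr2 (br (b (Sum.inr s)) y)).map_add]
        module
      · intro a u
        rw [hα.map_smul, brs1 a (b (Sum.inr s)) u, brs2, brs2]
        module
    have bilext : ∀ (ε : ℂ) (S T : Set W),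
        (∀ u ∈ S, ∀ v ∈ T, br (b (Sum.inr s)) (br u v) =
          (1 / (1 + Q ^ (s + 1))) •
            (br (br (b (Sum.inr s)) u) (α v) + ε • br (α u) (br (b (Sum.inr s)) v))) →
        ∀ x ∈ Submodule.span ℂ S, ∀ y ∈ Submodule.span ℂ T,
          br (b (Sum.inr s)) (br x y) =
          (1 / (1 + Q ^ (s + 1))) •
            (br (br (b (Sum.inr s)) x) (α y) + ε • br (α x) (br (b (Sum.inr s)) y)) := by
      intro ε S T hbase x hx
      induction hx using Submodule.span_induction with
      | mem u hu =>
        intro y hy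
        induction hy using Submodule.span_induction with
        | mem v hv => exact hbase u hu v hv
        | zero =>
          simp only [br0r, hα.map_zero, smul_zero, add_zero, zero_add]
        | add y1 y2 hy1 hy2 ih1 ih2 =>
          rw [(hbr1 u).map_add y1 y2, (hbr1 (b (Sum.inr s))).map_add, hα.map_add y1 y2,
            (hbr1 (br (b (Sum.inr s)) u)).map_add, (hbr1 (b (Sum.inr s))).map_add y1 y2,
            (hbr1 (α u)).map_add, ih1, ih2]
          module
        | smul a y1 hy1 ih =>
          rw [brs1 a u y1, brs1, hα.map_smul a y1, brs1,
            brs1 a (b (Sum.inr s)) y1, brs1, ih]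
          module
      | zero =>
        intro y hy
        simp only [br0l, br0r, hα.map_zero, smul_zero, add_zero, zero_add]
      | add x1 x2 hx1 hx2 ih1 ih2 =>
        intro y hy
        rw [(hbr2 y).map_add x1 x2, (hbr1 (b (Sum.inr s))).map_add, hα.map_add x1 x2,
          (hbr1 (b (Sum.inr s))).map_add x1 x2, (hbr2 (α y)).map_add,
          (hbr2 (br (b (Sum.inr s)) y)).map_add, ih1 y hy, ih2 y hy]
        module
      | smul a x1 hx1 ih =>
        intro y hy
        rw [brs2 a x1 y, brs1, hα.map_smul a x1, brs1 a (b (Sum.inr s)) x1,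
          brs2, brs2, ih y hy]
        module
    intro i j x hx y hy
    have hij : ∀ k : ZMod 2, k = 0 ∨ k = 1 := by decide
    have h1ps : (1 : ℂ) + Q ^ s * Q ≠ 0 := by
      have := h1p (s + 1); rwa [zadd, zpow_one] at this
    rcases hij i with hi | hi <;> rcases hij j with hj | hj <;> subst hi <;> subst hj
    · -- (0, 0)
      simp only [wGr, if_pos rfl] at hx hy
      simp only [show ((0 : ZMod 2)).val = 0 from rfl, pow_zero]
      refine bilext 1 _ _ ?_ x hx y hy
      rintro u ⟨n, rfl⟩ v ⟨m, rfl⟩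
      rw [hLL n m, brs1, hGL (n + m) s, hGL n s, hGL m s, hαL m, hαL n]
      simp only [brn1, brn2, brs1, brs2, smul_neg, neg_neg, one_smul]
      rw [hGL m (n + s), hLG n (m + s)]
      rw [show m + (n + s) = n + m + s by ring, show n + (m + s) = n + m + s by ring]
      match_scalars
      simp only [qInt, zadd, zpow_one]
      have h1ps' : (1 : ℂ) + Q * Q ^ s ≠ 0 := by rwa [mul_comm] at h1ps
      field_simp
      ring
    · -- (0, 1)
      simp only [wGr, if_pos rfl, if_neg (by decide : (1 : ZMod 2) ≠ 0)] at hx hy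
      simp only [show ((0 : ZMod 2)).val = 0 from rfl, pow_zero]
      refine bilext 1 _ _ ?_ x hx y hy
      rintro u ⟨n, rfl⟩ v ⟨m, rfl⟩
      rw [hLG n m, brs1, hGG s (n + m), smul_zero, hGL n s, hαG m, hGG s m, br0r]
      simp only [brn2, brs2, brs1, hGG, smul_zero, neg_zero, add_zero, zero_add, one_smul]
    · -- (1, 0)
      simp only [wGr, if_pos rfl, if_neg (by decide : (1 : ZMod 2) ≠ 0)] at hx hy
      simp only [show ((1 : ZMod 2)).val = 1 from rfl, pow_one]
      refine bilext (-1) _ _ ?_ x hx y hy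
      rintro u ⟨n, rfl⟩ v ⟨m, rfl⟩
      rw [hGL m n, hGG s n, br0l, hαG n, hGL m s]
      simp only [brn1, brn2, brs1, brs2, hGG, smul_zero, neg_zero, add_zero, zero_add,
        smul_neg, neg_neg]
    · -- (1, 1)
      simp only [wGr, if_neg (by decide : (1 : ZMod 2) ≠ 0)] at hx hy
      simp only [show ((1 : ZMod 2)).val = 1 from rfl, pow_one]
      refine bilext (-1) _ _ ?_ x hx y hy
      rintro u ⟨n, rfl⟩ v ⟨m, rfl⟩
      rw [hGG n m, br0r, hGG s n, br0l, hGG s m, br0r]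
      simp only [hα.map_zero, smul_zero, add_zero, zero_add, neg_zero]
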